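/- (Lower bound on social welfare, used in Theorem 4) Assume additionally that t_ij^F(0) ≥ 0 and t_ij^A(0) ≥ 0 for every ordered pair (i,j) with j ≠ i. Then in any environment with n ≥ 1 countries, for every strategy matrix U, the total welfare satisfies Σ_{i∈N} f_i(U) ≥ (n−1) · min_{i∈N} t_ii^F(0) + min_{i∈N} t_ii^F(1). (The proof uses that at least one country survives under U, that each survivor i has f_i(U) ≥ t_ii^F(1), and that each non-survivor i has f_i(U) = t_ii^F(0).) -/
import Mathlib


open Finset

/-- A networked environment: friend sets, adversary sets and powers. -/
structure Env (n : ℕ) where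
  F : Fin n → Finset (Fin n)
  A : Fin n → Finset (Fin n)
  p : Fin n → ℝ
  self_friend : ∀ i, i ∈ F i
  disj : ∀ i, Disjoint (F i) (A i)
  F_symm : ∀ i j, j ∈ F i ↔ i ∈ F j
  A_symm : ∀ i j, j ∈ A i ↔ i ∈ A j
  p_nonneg : ∀ i, 0 ≤ p i

/-- `U` is a strategy matrix for environment `E`. -/
def IsStrat {n : ℕ} (E : Env n) (U : Fin n → Fin n → ℝ) : Prop :=
  (∀ i j, 0 ≤ U i j) ∧ (∀ i, ∑ j, U i j = E.p i) ∧
    (∀ i j, j ∉ E.F i → j ∉ E.A i → U i j = 0)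

/-- Total support `σ_i(U)`. -/
def totalSupport {n : ℕ} (E : Env n) (U : Fin n → Fin n → ℝ) (i : Fin n) : ℝ :=
  (∑ j ∈ E.F i, U j i) + ∑ j ∈ E.A i, U i j

/-- Total threat `τ_i(U)`. -/
def totalThreat {n : ℕ} (E : Env n) (U : Fin n → Fin n → ℝ) (i : Fin n) : ℝ :=
  ∑ j ∈ E.A i, U j i

/-- Country `i` survives under `U` (is safe or precarious). -/
def Survives {n : ℕ} (E : Env n) (U : Fin n → Fin n → ℝ) (i : Fin n) : Prop :=
  totalThreat E U i ≤ totalSupport E U i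

open Classical in
/-- Country `i`'s utility `f_i(U)` given pairwise utilities `tF1 ≥ tF0`, `tA1 ≥ tA0`. -/
noncomputable def utility {n : ℕ} (E : Env n) (tF1 tF0 tA1 tA0 : Fin n → Fin n → ℝ)
    (U : Fin n → Fin n → ℝ) (i : Fin n) : ℝ :=
  if totalSupport E U i < totalThreat E U i then tF0 i i
  else (∑ j ∈ E.F i, if totalThreat E U j ≤ totalSupport E U j then tF1 i j else tF0 i j)
     + ∑ j ∈ E.A i, if totalSupport E U j ≤ totalThreat E U j then tA1 i j else tA0 i j

/-- `U` is a (pure strategy) Nash equilibrium of the power allocation game. -/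
noncomputable def IsNash {n : ℕ} (E : Env n) (tF1 tF0 tA1 tA0 : Fin n → Fin n → ℝ)
    (U : Fin n → Fin n → ℝ) : Prop :=
  IsStrat E U ∧ ∀ (i : Fin n) (v : Fin n → ℝ), (∀ j, 0 ≤ v j) → (∑ j, v j = E.p i) →
    (∀ j, j ∉ E.F i → j ∉ E.A i → v j = 0) →
    utility E tF1 tF0 tA1 tA0 (Function.update U i v) i ≤ utility E tF1 tF0 tA1 tA0 U i

/-- Country `i`'s optimal welfare: the sup of its utility over all strategy matrices. -/
noncomputable def optWelfare {n : ℕ} (E : Env n) (tF1 tF0 tA1 tA0 : Fin n → Fin n → ℝ)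
    (i : Fin n) : ℝ :=
  sSup {x | ∃ U, IsStrat E U ∧ x = utility E tF1 tF0 tA1 tA0 U i}


section Aux
open Classical

variable {n : ℕ} (E : Env n) (U : Fin n → Fin n → ℝ)

lemma exists_survivor (hn : 0 < n) (hU : IsStrat E U) :
    ∃ i, Survives E U i := by
  by_contra h
  push_neg at h
  have hlt : ∀ i, totalSupport E U i < totalThreat E U i := by
    intro i
    have := h i
    unfold Survives at this
    linarith [not_le.mp this]
  have key : ∑ i, totalThreat E U i = ∑ i, ∑ j ∈ E.A i, U i j := by
    unfold totalThreat
    have h1 : ∀ i : Fin n, ∑ j ∈ E.A i, U j i = ∑ j, if j ∈ E.A i then U j i else 0 := by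
      intro i
      rw [Finset.sum_ite_mem]
      simp
    have h2 : ∀ i : Fin n, ∑ j ∈ E.A i, U i j = ∑ j, if j ∈ E.A i then U i j else 0 := by
      intro i
      rw [Finset.sum_ite_mem]
      simp
    simp only [h1, h2]
    rw [Finset.sum_comm]
    apply Finset.sum_congr rfl
    intro j _
    apply Finset.sum_congr rfl
    intro i _
    simp only [E.A_symm i j]
  have hle : ∑ i, totalThreat E U i ≤ ∑ i, totalSupport E U i := by
    rw [key]
    apply Finset.sum_le_sum
    intro i _
    unfold totalSupport
    have : 0 ≤ ∑ j ∈ E.F i, U j i :=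
      Finset.sum_nonneg fun j _ => hU.1 j i
    linarith
  have : ∑ i, totalSupport E U i < ∑ i, totalThreat E U i := by
    apply Finset.sum_lt_sum_of_nonempty
    · exact Finset.univ_nonempty_iff.mpr ⟨⟨0, hn⟩⟩
    · intro i _; exact hlt i
  linarith

lemma survivor_utility_ge (tF1 tF0 tA1 tA0 : Fin n → Fin n → ℝ)
    (ht : ∀ k j, tF0 k j ≤ tF1 k j ∧ tA0 k j ≤ tA1 k j)
    (ht0 : ∀ k j, j ≠ k → 0 ≤ tF0 k j ∧ 0 ≤ tA0 k j)
    (i : Fin n) (hs : Survives E U i) :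
    tF1 i i ≤ utility E tF1 tF0 tA1 tA0 U i := by
  have hs' : totalThreat E U i ≤ totalSupport E U i := hs
  unfold utility
  rw [if_neg (not_lt.mpr hs')]
  have hF : tF1 i i ≤ ∑ j ∈ E.F i, if totalThreat E U j ≤ totalSupport E U j
      then tF1 i j else tF0 i j := by
    rw [← Finset.add_sum_erase _ _ (E.self_friend i)]
    have hi : (if totalThreat E U i ≤ totalSupport E U i then tF1 i i else tF0 i i)
        = tF1 i i := by
      rw [if_pos hs']
    rw [hi]
    have : 0 ≤ ∑ j ∈ (E.F i).erase i,
        if totalThreat E U j ≤ totalSupport E U j then tF1 i j else tF0 i j := by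
      apply Finset.sum_nonneg
      intro j hj
      have hji : j ≠ i := Finset.ne_of_mem_erase hj
      have h0 := (ht0 i j hji).1
      have h1 := (ht i j).1
      split_ifs <;> linarith
    linarith
  have hA : (0:ℝ) ≤ ∑ j ∈ E.A i, if totalSupport E U j ≤ totalThreat E U j
      then tA1 i j else tA0 i j := by
    apply Finset.sum_nonneg
    intro j hj
    have hji : j ≠ i := by
      intro h
      exact Finset.disjoint_left.mp (E.disj i) (E.self_friend i) (h ▸ hj)
    have h0 := (ht0 i j hji).2
    have h1 := (ht i j).2
    split_ifs <;> linarith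
  linarith

lemma any_utility_ge (tF1 tF0 tA1 tA0 : Fin n → Fin n → ℝ)
    (ht : ∀ k j, tF0 k j ≤ tF1 k j ∧ tA0 k j ≤ tA1 k j)
    (ht0 : ∀ k j, j ≠ k → 0 ≤ tF0 k j ∧ 0 ≤ tA0 k j)
    (i : Fin n) :
    tF0 i i ≤ utility E tF1 tF0 tA1 tA0 U i := by
  by_cases hs : Survives E U i
  · have := survivor_utility_ge E U tF1 tF0 tA1 tA0 ht ht0 i hs
    have := (ht i i).1
    linarith
  · unfold utility
    unfold Survives at hs
    rw [if_pos (not_le.mp hs)]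

end Aux

/-- lower bound on social welfare, used in Theorem 4: if moreover
`t_ij^F(0) ≥ 0` and `t_ij^A(0) ≥ 0` for all `j ≠ i`, then in any environment with
`n ≥ 1` countries the total welfare under any strategy matrix is at least
`(n-1) · min_i t_ii^F(0) + min_i t_ii^F(1)`. -/
theorem total_welfare_lower_bound {n : ℕ} (hn : 0 < n) (E : Env n)
    (tF1 tF0 tA1 tA0 : Fin n → Fin n → ℝ)
    (ht : ∀ k j, tF0 k j ≤ tF1 k j ∧ tA0 k j ≤ tA1 k j)
    (ht0 : ∀ k j, j ≠ k → 0 ≤ tF0 k j ∧ 0 ≤ tA0 k j)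
    (U : Fin n → Fin n → ℝ) (hU : IsStrat E U) :
    ((n : ℝ) - 1) * (⨅ i : Fin n, tF0 i i) + (⨅ i : Fin n, tF1 i i) ≤
      ∑ i, utility E tF1 tF0 tA1 tA0 U i := by
  classical
  haveI : Nonempty (Fin n) := ⟨⟨0, hn⟩⟩
  obtain ⟨i0, hi0⟩ := exists_survivor E U hn hU
  have hF0 : BddBelow (Set.range fun i : Fin n => tF0 i i) :=
    Set.Finite.bddBelow (Set.finite_range _)
  have hF1 : BddBelow (Set.range fun i : Fin n => tF1 i i) :=
    Set.Finite.bddBelow (Set.finite_range _)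
  have hsplit : ∑ i, utility E tF1 tF0 tA1 tA0 U i
      = utility E tF1 tF0 tA1 tA0 U i0
        + ∑ i ∈ Finset.univ.erase i0, utility E tF1 tF0 tA1 tA0 U i := by
    rw [Finset.add_sum_erase _ _ (Finset.mem_univ i0)]
  rw [hsplit]
  have h1 : (⨅ i : Fin n, tF1 i i) ≤ utility E tF1 tF0 tA1 tA0 U i0 := by
    have := survivor_utility_ge E U tF1 tF0 tA1 tA0 ht ht0 i0 hi0
    exact le_trans (ciInf_le hF1 i0) this
  have h2 : ((n : ℝ) - 1) * (⨅ i : Fin n, tF0 i i)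
      ≤ ∑ i ∈ Finset.univ.erase i0, utility E tF1 tF0 tA1 tA0 U i := by
    have hcard : (Finset.univ.erase i0).card = n - 1 := by
      rw [Finset.card_erase_of_mem (Finset.mem_univ i0), Finset.card_univ, Fintype.card_fin]
    have hb : ∀ i ∈ Finset.univ.erase i0,
        (⨅ i : Fin n, tF0 i i) ≤ utility E tF1 tF0 tA1 tA0 U i := by
      intro i _
      exact le_trans (ciInf_le hF0 i) (any_utility_ge E U tF1 tF0 tA1 tA0 ht ht0 i)
    calc ((n : ℝ) - 1) * (⨅ i : Fin n, tF0 i i)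
        = (Finset.univ.erase i0).card * (⨅ i : Fin n, tF0 i i) := by
          rw [hcard]
          congr 1
          rw [Nat.cast_sub hn]
          simp
      _ ≤ ∑ i ∈ Finset.univ.erase i0, utility E tF1 tF0 tA1 tA0 U i := by
          have := Finset.card_nsmul_le_sum (Finset.univ.erase i0) _ _ hb
          simpa [nsmul_eq_mul] using this
  linarith
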